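/- Reduction correctness for acyclic digraphs: Given a (3,B2)-SAT instance with variables x_1,...,x_n (each literal occurring exactly twice) and clauses C_1,...,C_m, construct the two-scenario robust flow network of Theorem 5 (variable vertices v_1,...,v_{n+1}, clause vertices u_1,...,u_m, literal gadget paths p_i and p̄_i with fixed literal arcs, capacities 1, costs 0; scenario 1 sends one unit from v_1 to v_{n+1}, scenario 2 sends 2n units from v_1 to the clause vertices u_j (one unit each) and vertex t (2n-m units)). Then the SAT instance is satisfiable if and only if there exists an integral robust b-flow in the constructed network (equivalently, one of cost at most 0). -/

import Mathlib

open Finset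

structure Net (V A : Type) where
  src : A → V
  dst : A → V
  isFixed : A → Bool
  u : A → ℤ
  c : A → ℤ

variable {V A : Type} [Fintype V] [Fintype A] [DecidableEq V]

def excess (N : Net V A) (f : A → ℤ) (v : V) : ℤ :=
  ∑ a ∈ univ.filter (fun a => N.src a = v), f a -
    ∑ a ∈ univ.filter (fun a => N.dst a = v), f a

def IsFlow (N : Net V A) (b : V → ℤ) (f : A → ℤ) : Prop :=
  (∀ a, 0 ≤ f a ∧ f a ≤ N.u a) ∧ ∀ v, excess N f v = b v

def IsRobust {Λ : Type} (N : Net V A) (b : Λ → V → ℤ) (f : Λ → A → ℤ) : Prop :=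
  (∀ lam, IsFlow N (b lam) (f lam)) ∧
    ∀ lam lam' a, N.isFixed a = true → f lam a = f lam' a

/-! ## The construction of Theorem 5.

A `(3,B2)`-SAT instance with `n` variables and `m` clauses is encoded by a bijection
`e : Fin m × Fin 3 ≃ Fin n × Bool × Fin 2` between clause slots and literal
occurrences: `e (j, slot) = (i, pol, k)` means that the `k`-th occurrence of the
literal `x_i` (if `pol = true`) resp. `¬x_i` (if `pol = false`) fills the
`slot`-th position of clause `C_j`.  (Each clause has exactly 3 literals and each
literal occurs exactly twice.)

Vertices: the variable vertices `v_1,…,v_{n+1}` (`Fin (n+1)`), the clause vertices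
`u_1,…,u_m` (`Fin m`), the auxiliary vertices `w_i^1,…,w_i^4`, `w̄_i^1,…,w̄_i^4`
(`Fin n × Bool × Fin 4`, 0-indexed) and the auxiliary sink `t` (`Unit`). -/

abbrev SatV (n m : ℕ) := Fin (n + 1) ⊕ Fin m ⊕ (Fin n × Bool × Fin 4) ⊕ Unit

/-- Arcs: path arcs of the literal paths `p_i`, `p̄_i` (segments `0,…,4`), clause arcs
`(w^{2k+1}, u_j)`, source arcs `(v_1, w^{2k})`, and sink arcs `(w^{2k+1}, t)`. -/
abbrev SatA (n m : ℕ) :=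
  (Fin n × Bool × Fin 5) ⊕ (Fin m × Fin 3) ⊕ (Fin n × Bool × Fin 2) ⊕ (Fin n × Bool × Fin 2)

def wVert (n m : ℕ) (i : Fin n) (pol : Bool) (k : Fin 4) : SatV n m :=
  Sum.inr (Sum.inr (Sum.inl (i, pol, k)))

def pathSrc (n m : ℕ) (i : Fin n) (pol : Bool) (ℓ : Fin 5) : SatV n m :=
  if h : ℓ.val = 0 then Sum.inl i.castSucc
  else wVert n m i pol ⟨ℓ.val - 1, by omega⟩

def pathDst (n m : ℕ) (i : Fin n) (pol : Bool) (ℓ : Fin 5) : SatV n m :=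
  if h : ℓ.val = 4 then Sum.inl i.succ
  else wVert n m i pol ⟨ℓ.val, by omega⟩

def satNet (n m : ℕ) (e : Fin m × Fin 3 ≃ Fin n × Bool × Fin 2) :
    Net (SatV n m) (SatA n m) where
  src a :=
    match a with
    | Sum.inl (i, pol, ℓ) => pathSrc n m i pol ℓ
    | Sum.inr (Sum.inl js) =>
        wVert n m (e js).1 (e js).2.1 ⟨2 * ((e js).2.2 : ℕ) + 1, by omega⟩
    | Sum.inr (Sum.inr (Sum.inl _)) => Sum.inl 0
    | Sum.inr (Sum.inr (Sum.inr (i, pol, k))) =>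
        wVert n m i pol ⟨2 * (k : ℕ) + 1, by omega⟩
  dst a :=
    match a with
    | Sum.inl (i, pol, ℓ) => pathDst n m i pol ℓ
    | Sum.inr (Sum.inl (j, _)) => Sum.inr (Sum.inl j)
    | Sum.inr (Sum.inr (Sum.inl (i, pol, k))) =>
        wVert n m i pol ⟨2 * (k : ℕ), by omega⟩
    | Sum.inr (Sum.inr (Sum.inr _)) => Sum.inr (Sum.inr (Sum.inr ()))
  isFixed a :=
    match a with
    | Sum.inl (_, _, ℓ) => decide (ℓ.val = 1 ∨ ℓ.val = 3)
    | _ => false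
  u _ := 1
  c _ := 0

/-- Balances: scenario `0` sends one unit from `v_1` to `v_{n+1}`; scenario `1`
sends `2n` units from `v_1`: one unit to each clause vertex and `2n - m` units to `t`. -/
def satB (n m : ℕ) : Fin 2 → SatV n m → ℤ := fun lam v =>
  if lam = 0 then
    match v with
    | Sum.inl i => if i = 0 then 1 else if i = Fin.last n then -1 else 0
    | _ => 0
  else
    match v with
    | Sum.inl i => if i = 0 then 2 * n else 0
    | Sum.inr (Sum.inl _) => -1
    | Sum.inr (Sum.inr (Sum.inl _)) => 0
    | Sum.inr (Sum.inr (Sum.inr _)) => (m : ℤ) - 2 * n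


namespace SatAux

variable {n m : ℕ}

def pArc (i : Fin n) (pol : Bool) (ℓ : Fin 5) : SatA n m := Sum.inl (i, pol, ℓ)
def cArc (js : Fin m × Fin 3) : SatA n m := Sum.inr (Sum.inl js)
def sArc (o : Fin n × Bool × Fin 2) : SatA n m := Sum.inr (Sum.inr (Sum.inl o))
def tArc (o : Fin n × Bool × Fin 2) : SatA n m := Sum.inr (Sum.inr (Sum.inr o))

variable (e : Fin m × Fin 3 ≃ Fin n × Bool × Fin 2)

lemma excess_expand (f : SatA n m → ℤ) (v : SatV n m) :
    excess (satNet n m e) f v =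
      ((∑ x : Fin n × Bool × Fin 5, if pathSrc n m x.1 x.2.1 x.2.2 = v then f (pArc x.1 x.2.1 x.2.2) else 0)
       + (∑ x : Fin m × Fin 3, if wVert n m (e x).1 (e x).2.1 ⟨2 * ((e x).2.2 : ℕ) + 1, by omega⟩ = v then f (cArc x) else 0)
       + (∑ x : Fin n × Bool × Fin 2, if (Sum.inl 0 : SatV n m) = v then f (sArc x) else 0)
       + (∑ x : Fin n × Bool × Fin 2, if wVert n m x.1 x.2.1 ⟨2 * (x.2.2 : ℕ) + 1, by omega⟩ = v then f (tArc x) else 0))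
      - ((∑ x : Fin n × Bool × Fin 5, if pathDst n m x.1 x.2.1 x.2.2 = v then f (pArc x.1 x.2.1 x.2.2) else 0)
       + (∑ x : Fin m × Fin 3, if (Sum.inr (Sum.inl x.1) : SatV n m) = v then f (cArc x) else 0)
       + (∑ x : Fin n × Bool × Fin 2, if wVert n m x.1 x.2.1 ⟨2 * (x.2.2 : ℕ), by omega⟩ = v then f (sArc x) else 0)
       + (∑ x : Fin n × Bool × Fin 2, if (Sum.inr (Sum.inr (Sum.inr ())) : SatV n m) = v then f (tArc x) else 0)) := by
  simp only [excess, Finset.sum_filter]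
  simp only [excess, satNet, Finset.sum_filter, Fintype.sum_sum_type, pArc, cArc, sArc, tArc]
  simp only [Prod.mk.eta]
  abel

lemma pathSrc_eq_w (i' i : Fin n) (pol' pol : Bool) (ℓ : Fin 5) (kk : Fin 4) :
    pathSrc n m i' pol' ℓ = wVert n m i pol kk ↔
      (i', pol', ℓ) = (i, pol, (⟨kk.val + 1, by omega⟩ : Fin 5)) := by
  unfold pathSrc wVert
  split_ifs with h
  · simp only [reduceCtorEq, false_iff, Prod.mk.injEq, not_and, Fin.ext_iff] <;>
      (intro _ _; omega)
  · simp only [Sum.inr.injEq, Sum.inl.injEq, Prod.mk.injEq, Fin.ext_iff]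
    constructor <;> rintro ⟨h1, h2, h3⟩ <;> exact ⟨h1, h2, by omega⟩

lemma pathDst_eq_w (i' i : Fin n) (pol' pol : Bool) (ℓ : Fin 5) (kk : Fin 4) :
    pathDst n m i' pol' ℓ = wVert n m i pol kk ↔
      (i', pol', ℓ) = (i, pol, (⟨kk.val, by omega⟩ : Fin 5)) := by
  unfold pathDst wVert
  split_ifs with h
  · simp only [reduceCtorEq, false_iff, Prod.mk.injEq, not_and, Fin.ext_iff] <;>
      (intro _ _; omega)
  · simp only [Sum.inr.injEq, Sum.inl.injEq, Prod.mk.injEq, Fin.ext_iff]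

lemma pathSrc_eq_inl (i' : Fin n) (pol' : Bool) (ℓ : Fin 5) (i0 : Fin (n+1)) :
    pathSrc n m i' pol' ℓ = Sum.inl i0 ↔ (ℓ.val = 0 ∧ i'.castSucc = i0) := by
  unfold pathSrc
  split_ifs with h
  · simp [h]
  · simp [wVert, h]

lemma pathDst_eq_inl (i' : Fin n) (pol' : Bool) (ℓ : Fin 5) (i0 : Fin (n+1)) :
    pathDst n m i' pol' ℓ = Sum.inl i0 ↔ (ℓ.val = 4 ∧ i'.succ = i0) := by
  unfold pathDst
  split_ifs with h
  · simp [h]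
  · simp [wVert, h]

lemma pathSrc_ne_u (i' : Fin n) (pol' : Bool) (ℓ : Fin 5) (j : Fin m) :
    pathSrc n m i' pol' ℓ = Sum.inr (Sum.inl j) ↔ False := by
  unfold pathSrc; split_ifs <;> simp [wVert]

lemma pathDst_ne_u (i' : Fin n) (pol' : Bool) (ℓ : Fin 5) (j : Fin m) :
    pathDst n m i' pol' ℓ = Sum.inr (Sum.inl j) ↔ False := by
  unfold pathDst; split_ifs <;> simp [wVert]

lemma pathSrc_ne_t (i' : Fin n) (pol' : Bool) (ℓ : Fin 5) :
    pathSrc n m i' pol' ℓ = Sum.inr (Sum.inr (Sum.inr ())) ↔ False := by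
  unfold pathSrc; split_ifs <;> simp [wVert]

lemma pathDst_ne_t (i' : Fin n) (pol' : Bool) (ℓ : Fin 5) :
    pathDst n m i' pol' ℓ = Sum.inr (Sum.inr (Sum.inr ())) ↔ False := by
  unfold pathDst; split_ifs <;> simp [wVert]

lemma wVert_eq_w (i' i : Fin n) (pol' pol : Bool) (k' k : Fin 4) :
    wVert n m i' pol' k' = wVert n m i pol k ↔ (i', pol', k') = (i, pol, k) := by
  simp [wVert, Prod.ext_iff]

lemma clause_sum (g : Fin m × Fin 3 → ℤ) (o : Fin n × Bool × Fin 2) :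
    ∑ x : Fin m × Fin 3, (if e x = o then g x else 0) = g (e.symm o) := by
  have h := Equiv.sum_comp e (fun o' => if o' = o then g (e.symm o') else 0)
  simp only [Equiv.symm_apply_apply] at h
  rw [h]
  simp

lemma sum_if_const {α : Type} [Fintype α] (c : Prop) [Decidable c] (g : α → ℤ) :
    ∑ x : α, (if c then g x else 0) = if c then ∑ x : α, g x else 0 := by
  split_ifs <;> simp

lemma sum_triple_ite {α β γ : Type} [Fintype α] [Fintype β] [Fintype γ]
    [DecidableEq α] [DecidableEq β] [DecidableEq γ] (a : α) (b : β) (c : γ)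
    (g : α × β × γ → ℤ) :
    ∑ x : α × β × γ, (if x.1 = a ∧ x.2.1 = b ∧ x.2.2 = c then g x else 0) = g (a, b, c) := by
  have h : ∀ x : α × β × γ, (x.1 = a ∧ x.2.1 = b ∧ x.2.2 = c) ↔ x = (a, b, c) := by
    intro x; simp [Prod.ext_iff]
  simp only [h, Finset.sum_ite_eq', Finset.mem_univ, if_true]

lemma clause_sum' (g : Fin m × Fin 3 → ℤ) (i : Fin n) (pol : Bool) (k : Fin 2) :
    ∑ x : Fin m × Fin 3, (if (e x).1 = i ∧ (e x).2.1 = pol ∧ (e x).2.2 = k then g x else 0)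
      = g (e.symm (i, pol, k)) := by
  have h : ∀ x : Fin m × Fin 3, ((e x).1 = i ∧ (e x).2.1 = pol ∧ (e x).2.2 = k) ↔ e x = (i, pol, k) := by
    intro x; simp [Prod.ext_iff]
  simp only [h]
  exact clause_sum e g (i, pol, k)

lemma fin_filter_val {N : ℕ} (c : ℕ) (hc : c < N) (P : Prop) [Decidable P] (g : Fin N → ℤ) :
    ∑ ℓ : Fin N, (if ℓ.val = c ∧ P then g ℓ else 0) = if P then g ⟨c, hc⟩ else 0 := by
  by_cases hP : P
  · simp only [hP, and_true]
    have h2 : ∀ ℓ : Fin N, (ℓ.val = c) ↔ ℓ = ⟨c, hc⟩ := fun ℓ => by simp [Fin.ext_iff]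
    simp only [h2, Finset.sum_ite_eq', Finset.mem_univ, if_true]
  · simp [hP]

lemma two_mul_add_one_ne_two_mul (a b : ℕ) : (2*a + 1 = 2*b) ↔ False := by rw [iff_false]; omega
lemma two_mul_ne_two_mul_add_one (a b : ℕ) : (2*a = 2*b + 1) ↔ False := by rw [iff_false]; omega
lemma two_mul_add_one_inj (a b : Fin 2) : (2*(a:ℕ) + 1 = 2*(b:ℕ) + 1) ↔ a = b := by
  constructor
  · intro h; exact Fin.ext (by omega)
  · intro h; subst h; rfl
lemma two_mul_inj (a b : Fin 2) : (2*(a:ℕ) = 2*(b:ℕ)) ↔ a = b := by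
  constructor
  · intro h; exact Fin.ext (by omega)
  · intro h; subst h; rfl

lemma excess_w_even (f : SatA n m → ℤ) (i : Fin n) (pol : Bool) (k : Fin 2) :
    excess (satNet n m e) f (wVert n m i pol ⟨2*k.val, by omega⟩) =
      f (pArc i pol ⟨2*k.val+1, by omega⟩) - f (pArc i pol ⟨2*k.val, by omega⟩)
        - f (sArc (i, pol, k)) := by
  rw [excess_expand]
  simp only [pathSrc_eq_w, pathDst_eq_w, wVert_eq_w, Prod.mk.injEq, Fin.mk.injEq,
    reduceCtorEq, Sum.inr.injEq, Sum.inl.injEq, if_false, false_and, and_false,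
    Finset.sum_const_zero, add_zero, zero_add,
    two_mul_add_one_ne_two_mul, two_mul_ne_two_mul_add_one, two_mul_add_one_inj, two_mul_inj,
    iff_false, false_iff]
  simp only [wVert, reduceCtorEq, Sum.inr.injEq, if_false, Finset.sum_const_zero,
    add_zero, zero_add, sub_zero, sum_triple_ite]
  ring

lemma excess_w_odd (f : SatA n m → ℤ) (i : Fin n) (pol : Bool) (k : Fin 2) :
    excess (satNet n m e) f (wVert n m i pol ⟨2*k.val+1, by omega⟩) =
      f (pArc i pol ⟨2*k.val+1+1, by omega⟩) + f (cArc (e.symm (i, pol, k))) + f (tArc (i, pol, k))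
        - f (pArc i pol ⟨2*k.val+1, by omega⟩) := by
  rw [excess_expand]
  simp only [pathSrc_eq_w, pathDst_eq_w, wVert_eq_w, Prod.mk.injEq, Fin.mk.injEq,
    reduceCtorEq, Sum.inr.injEq, Sum.inl.injEq, if_false, false_and, and_false,
    Finset.sum_const_zero, add_zero, zero_add,
    two_mul_add_one_ne_two_mul, two_mul_ne_two_mul_add_one, two_mul_add_one_inj, two_mul_inj,
    iff_false, false_iff]
  simp only [wVert, reduceCtorEq, Sum.inr.injEq, if_false, Finset.sum_const_zero,
    add_zero, zero_add, sub_zero, sum_triple_ite, clause_sum']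

lemma sum_fst_ite {α β : Type} [Fintype α] [Fintype β] [DecidableEq α] (j : α) (g : α × β → ℤ) :
    ∑ x : α × β, (if x.1 = j then g x else 0) = ∑ b : β, g (j, b) := by
  have h1 : ∑ x : α × β, (if x.1 = j then g x else 0)
      = ∑ a : α, ∑ b : β, (if a = j then g (a, b) else 0) := by
    rw [Fintype.sum_prod_type]
  rw [h1]
  simp only [sum_if_const, Finset.sum_ite_eq', Finset.mem_univ, if_true]

lemma excess_u (f : SatA n m → ℤ) (j : Fin m) :
    excess (satNet n m e) f (Sum.inr (Sum.inl j)) = - ∑ slot : Fin 3, f (cArc (j, slot)) := by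
  rw [excess_expand]
  simp only [pathSrc_ne_u, pathDst_ne_u, wVert, reduceCtorEq, Sum.inr.injEq, Sum.inl.injEq,
    if_false, false_and, Finset.sum_const_zero, add_zero, zero_add, iff_false, false_iff,
    zero_sub]
  rw [sum_fst_ite]

lemma excess_t (f : SatA n m → ℤ) :
    excess (satNet n m e) f (Sum.inr (Sum.inr (Sum.inr ()))) =
      - ∑ x : Fin n × Bool × Fin 2, f (tArc x) := by
  rw [excess_expand]
  simp only [pathSrc_ne_t, pathDst_ne_t, wVert, reduceCtorEq, Sum.inr.injEq, if_false,
    false_and, Finset.sum_const_zero, add_zero, zero_add, iff_false, false_iff, zero_sub,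
    eq_self_iff_true, if_true]

lemma excess_inl (f : SatA n m → ℤ) (i0 : Fin (n+1)) :
    excess (satNet n m e) f (Sum.inl i0) =
      (∑ i : Fin n, ∑ pol : Bool, if i.castSucc = i0 then f (pArc i pol ⟨0, by omega⟩) else 0)
      + (if (0 : Fin (n+1)) = i0 then ∑ x : Fin n × Bool × Fin 2, f (sArc x) else 0)
      - ∑ i : Fin n, ∑ pol : Bool, if i.succ = i0 then f (pArc i pol ⟨4, by omega⟩) else 0 := by
  rw [excess_expand]
  simp only [pathSrc_eq_inl, pathDst_eq_inl, wVert, reduceCtorEq, Sum.inl.injEq, if_false,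
    false_and, Finset.sum_const_zero, add_zero, zero_add, iff_false, false_iff]
  simp only [Fintype.sum_prod_type, fin_filter_val (N := 5) 0 (by omega),
    fin_filter_val (N := 5) 4 (by omega), sum_if_const]

end SatAux

namespace SatAux

variable {n m : ℕ} (e : Fin m × Fin 3 ≃ Fin n × Bool × Fin 2)

lemma excess_w0 (f : SatA n m → ℤ) (i : Fin n) (pol : Bool) (h0 : (0:ℕ) < 4) :
    excess (satNet n m e) f (Sum.inr (Sum.inr (Sum.inl (i, pol, ⟨0, h0⟩)))) =
      f (pArc i pol ⟨1, by omega⟩) - f (pArc i pol ⟨0, by omega⟩) - f (sArc (i, pol, 0)) :=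
  excess_w_even e f i pol 0

lemma excess_w1 (f : SatA n m → ℤ) (i : Fin n) (pol : Bool) (h0 : (1:ℕ) < 4) :
    excess (satNet n m e) f (Sum.inr (Sum.inr (Sum.inl (i, pol, ⟨1, h0⟩)))) =
      f (pArc i pol ⟨2, by omega⟩) + f (cArc (e.symm (i, pol, 0))) + f (tArc (i, pol, 0))
        - f (pArc i pol ⟨1, by omega⟩) :=
  excess_w_odd e f i pol 0

lemma excess_w2 (f : SatA n m → ℤ) (i : Fin n) (pol : Bool) (h0 : (2:ℕ) < 4) :
    excess (satNet n m e) f (Sum.inr (Sum.inr (Sum.inl (i, pol, ⟨2, h0⟩)))) =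
      f (pArc i pol ⟨3, by omega⟩) - f (pArc i pol ⟨2, by omega⟩) - f (sArc (i, pol, 1)) :=
  excess_w_even e f i pol 1

lemma excess_w3 (f : SatA n m → ℤ) (i : Fin n) (pol : Bool) (h0 : (3:ℕ) < 4) :
    excess (satNet n m e) f (Sum.inr (Sum.inr (Sum.inl (i, pol, ⟨3, h0⟩)))) =
      f (pArc i pol ⟨4, by omega⟩) + f (cArc (e.symm (i, pol, 1))) + f (tArc (i, pol, 1))
        - f (pArc i pol ⟨3, by omega⟩) :=
  excess_w_odd e f i pol 1

lemma satB0_inl (i0 : Fin (n+1)) :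
    satB n m 0 (Sum.inl i0) = if i0 = 0 then 1 else if i0 = Fin.last n then -1 else 0 := rfl
lemma satB0_u (j : Fin m) : satB n m 0 (Sum.inr (Sum.inl j)) = 0 := rfl
lemma satB0_w (x : Fin n × Bool × Fin 4) : satB n m 0 (Sum.inr (Sum.inr (Sum.inl x))) = 0 := rfl
lemma satB0_t : satB n m 0 (Sum.inr (Sum.inr (Sum.inr ()))) = 0 := rfl
lemma satB1_inl (i0 : Fin (n+1)) :
    satB n m 1 (Sum.inl i0) = if i0 = 0 then 2*(n:ℤ) else 0 := rfl
lemma satB1_u (j : Fin m) : satB n m 1 (Sum.inr (Sum.inl j)) = -1 := rfl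
lemma satB1_w (x : Fin n × Bool × Fin 4) : satB n m 1 (Sum.inr (Sum.inr (Sum.inl x))) = 0 := rfl
lemma satB1_t : satB n m 1 (Sum.inr (Sum.inr (Sum.inr ()))) = (m : ℤ) - 2*n := rfl

lemma bool_ite_sum (c : Bool) : (if true = c then (1:ℤ) else 0) + (if false = c then 1 else 0) = 1 := by
  cases c <;> simp

lemma sum_castSucc_ite (i0 : Fin (n+1)) :
    ∑ i : Fin n, (if i.castSucc = i0 then (1:ℤ) else 0) = if i0 = Fin.last n then 0 else 1 := by
  induction i0 using Fin.lastCases with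
  | last =>
      rw [if_pos rfl]
      exact Finset.sum_eq_zero fun i _ => if_neg (Fin.castSucc_lt_last i).ne
  | cast i1 =>
      rw [if_neg (Fin.castSucc_lt_last i1).ne]
      simp [Fin.castSucc_inj, Finset.sum_ite_eq']

lemma sum_succ_ite (i0 : Fin (n+1)) :
    ∑ i : Fin n, (if i.succ = i0 then (1:ℤ) else 0) = if i0 = 0 then 0 else 1 := by
  induction i0 using Fin.cases with
  | zero =>
      rw [if_pos rfl]
      exact Finset.sum_eq_zero fun i _ => if_neg (Fin.succ_ne_zero i)
  | succ i1 =>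
      rw [if_neg (Fin.succ_ne_zero i1)]
      simp [Fin.succ_inj, Finset.sum_ite_eq']

/-- Scenario-0 flow: route one unit through the chosen literal paths. -/
def fwd0 (σ : Fin n → Bool) : SatA n m → ℤ := fun a =>
  match a with
  | Sum.inl (i, pol, _) => if pol = σ i then 1 else 0
  | _ => 0

/-- Scenario-1 flow. -/
def fwd1 (σ : Fin n → Bool) (s : Fin m → Fin 3) : SatA n m → ℤ := fun a =>
  match a with
  | Sum.inl (i, pol, ℓ) => if pol = σ i ∧ (ℓ.val = 1 ∨ ℓ.val = 3) then 1 else 0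
  | Sum.inr (Sum.inl js) => if js.2 = s js.1 then 1 else 0
  | Sum.inr (Sum.inr (Sum.inl (i, pol, _))) => if pol = σ i then 1 else 0
  | Sum.inr (Sum.inr (Sum.inr o)) =>
      (if o.2.1 = σ o.1 then 1 else 0)
        - (if (e.symm o).2 = s (e.symm o).1 then 1 else 0)

variable {σ : Fin n → Bool} {s : Fin m → Fin 3}

lemma fwd0_p (i : Fin n) (pol : Bool) (ℓ : Fin 5) :
    fwd0 σ (pArc (m := m) i pol ℓ) = if pol = σ i then 1 else 0 := rfl
lemma fwd0_c (js : Fin m × Fin 3) : fwd0 σ (cArc (n := n) js) = 0 := rfl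
lemma fwd0_s (o : Fin n × Bool × Fin 2) : fwd0 σ (sArc (m := m) o) = 0 := rfl
lemma fwd0_t (o : Fin n × Bool × Fin 2) : fwd0 σ (tArc (m := m) o) = 0 := rfl

lemma fwd1_p (i : Fin n) (pol : Bool) (ℓ : Fin 5) :
    fwd1 e σ s (pArc i pol ℓ) = if pol = σ i ∧ (ℓ.val = 1 ∨ ℓ.val = 3) then 1 else 0 := rfl
lemma fwd1_c (js : Fin m × Fin 3) :
    fwd1 e σ s (cArc js) = if js.2 = s js.1 then 1 else 0 := rfl
lemma fwd1_s (o : Fin n × Bool × Fin 2) :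
    fwd1 e σ s (sArc o) = if o.2.1 = σ o.1 then 1 else 0 := rfl
lemma fwd1_t (o : Fin n × Bool × Fin 2) :
    fwd1 e σ s (tArc o) =
      (if o.2.1 = σ o.1 then 1 else 0)
        - (if (e.symm o).2 = s (e.symm o).1 then 1 else 0) := rfl

lemma fwd0_conserv (hn : 0 < n) (v : SatV n m) :
    excess (satNet n m e) (fwd0 σ) v = satB n m 0 v := by
  have h0last : (0 : Fin (n+1)) ≠ Fin.last n := by
    rw [Fin.ne_iff_vne]
    simp [Fin.val_last]
    omega
  rcases v with i0 | j | ⟨i, pol, k⟩ | ⟨⟩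
  · rw [excess_inl, satB0_inl]
    simp only [fwd0_p, fwd0_s, sum_if_const, Fintype.sum_bool, bool_ite_sum,
      Finset.sum_const_zero, sum_castSucc_ite, sum_succ_ite]
    by_cases h1 : i0 = 0
    · subst h1; simp [h0last]
    · by_cases h2 : i0 = Fin.last n <;> simp [h1, h2, hn.ne']
  · rw [excess_u, satB0_u]
    simp [fwd0_c]
  · rw [satB0_w]
    rcases k with ⟨kv, hk⟩
    interval_cases kv
    · rw [excess_w0]; simp [fwd0_p, fwd0_s]
    · rw [excess_w1]; simp [fwd0_p, fwd0_c, fwd0_t]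
    · rw [excess_w2]; simp [fwd0_p, fwd0_s]
    · rw [excess_w3]; simp [fwd0_p, fwd0_c, fwd0_t]
  · rw [excess_t, satB0_t]
    simp [fwd0_t]

lemma sum_src_val (σ : Fin n → Bool) :
    ∑ x : Fin n × Bool × Fin 2, (if x.2.1 = σ x.1 then (1:ℤ) else 0) = 2*n := by
  have h1 : ∀ i : Fin n, ∑ y : Bool × Fin 2, (if y.1 = σ i then (1:ℤ) else 0) = 2 := by
    intro i
    rw [Fintype.sum_prod_type]
    cases hσ : σ i <;> simp only [Fintype.sum_bool, Fin.sum_univ_two] <;> norm_num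
  rw [Fintype.sum_prod_type]
  simp only [h1, Finset.sum_const, Finset.card_univ, Fintype.card_fin, nsmul_eq_mul]
  push_cast
  ring

lemma sum_chosen_val (s : Fin m → Fin 3) :
    ∑ x : Fin n × Bool × Fin 2, (if (e.symm x).2 = s (e.symm x).1 then (1:ℤ) else 0) = m := by
  rw [← Equiv.sum_comp e (fun x => if (e.symm x).2 = s (e.symm x).1 then (1:ℤ) else 0)]
  simp only [Equiv.symm_apply_apply]
  rw [Fintype.sum_prod_type]
  simp [Finset.sum_ite_eq']

lemma fwd1_conserv (hs : ∀ j, (e (j, s j)).2.1 = σ (e (j, s j)).1) (v : SatV n m) :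
    excess (satNet n m e) (fwd1 e σ s) v = satB n m 1 v := by
  rcases v with i0 | j | ⟨i, pol, k⟩ | ⟨⟩
  · rw [excess_inl, satB1_inl]
    simp only [fwd1_p, fwd1_s]
    rw [sum_src_val]
    norm_num [-Finset.sum_boole]
    by_cases h1 : i0 = 0 <;> simp [h1, eq_comm]
  · rw [excess_u, satB1_u]
    simp [fwd1_c, Finset.sum_ite_eq']
  · rw [satB1_w]
    rcases k with ⟨kv, hk⟩
    interval_cases kv
    · rw [excess_w0]
      simp only [fwd1_p, fwd1_s]
      norm_num
    · rw [excess_w1]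
      simp only [fwd1_p, fwd1_c, fwd1_t, Equiv.symm_apply_apply]
      norm_num
    · rw [excess_w2]
      simp only [fwd1_p, fwd1_s]
      norm_num
    · rw [excess_w3]
      simp only [fwd1_p, fwd1_c, fwd1_t, Equiv.symm_apply_apply]
      norm_num
  · rw [excess_t, satB1_t]
    simp only [fwd1_t]
    rw [Finset.sum_sub_distrib, sum_src_val, sum_chosen_val]
    ring

lemma fwd0_cap (a : SatA n m) : 0 ≤ fwd0 σ a ∧ fwd0 σ a ≤ (satNet n m e).u a := by
  have hu : (satNet n m e).u a = 1 := rfl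
  rw [hu]
  rcases a with ⟨i,pol,ℓ⟩ | js | o | o <;> simp only [fwd0] <;> (try split_ifs) <;> norm_num

lemma fwd1_cap (hs : ∀ j, (e (j, s j)).2.1 = σ (e (j, s j)).1) (a : SatA n m) :
    0 ≤ fwd1 e σ s a ∧ fwd1 e σ s a ≤ (satNet n m e).u a := by
  have hu : (satNet n m e).u a = 1 := rfl
  rw [hu]
  rcases a with ⟨i,pol,ℓ⟩ | js | o | o
  · simp only [fwd1]; split_ifs <;> norm_num
  · simp only [fwd1]; split_ifs <;> norm_num
  · simp only [fwd1]; split_ifs <;> norm_num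
  · have key : (e.symm o).2 = s (e.symm o).1 → o.2.1 = σ o.1 := by
      intro hc
      have h3 : e ((e.symm o).1, s ((e.symm o).1)) = o := by
        rw [← hc]
        simp
      have h4 := hs (e.symm o).1
      rw [h3] at h4
      exact h4
    have hv : fwd1 e σ s (Sum.inr (Sum.inr (Sum.inr o))) =
        (if o.2.1 = σ o.1 then (1:ℤ) else 0)
          - (if (e.symm o).2 = s (e.symm o).1 then 1 else 0) := rfl
    rw [hv]
    by_cases h2 : (e.symm o).2 = s (e.symm o).1
    · rw [if_pos h2, if_pos (key h2)]; norm_num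
    · rw [if_neg h2]; split_ifs <;> norm_num

lemma fwd_agree (a : SatA n m) (hfix : (satNet n m e).isFixed a = true) :
    fwd1 e σ s a = fwd0 σ a := by
  rcases a with ⟨i,pol,ℓ⟩ | js | o | o
  · have hℓ : ℓ.val = 1 ∨ ℓ.val = 3 := by simpa [satNet] using hfix
    simp [fwd0, fwd1, hℓ]
  all_goals simp [satNet] at hfix

lemma fin2_eq_one {lam : Fin 2} (h : lam ≠ 0) : lam = 1 := by
  have h2 := lam.isLt
  have h3 : lam.val ≠ 0 := fun hc => h (Fin.ext hc)
  exact Fin.ext (by simp; omega)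

lemma forward (hn : 0 < n) (σ : Fin n → Bool) (s : Fin m → Fin 3)
    (hs : ∀ j, σ (e (j, s j)).1 = (e (j, s j)).2.1) :
    ∃ f : Fin 2 → SatA n m → ℤ, IsRobust (satNet n m e) (satB n m) f := by
  refine ⟨fun lam => if lam = 0 then fwd0 σ else fwd1 e σ s, ?_, ?_⟩
  · intro lam
    by_cases hl : lam = 0
    · subst hl
      simp only [if_pos rfl]
      exact ⟨fun a => fwd0_cap e a, fun v => fwd0_conserv e hn v⟩
    · rw [fin2_eq_one hl]
      simp only [if_neg (by norm_num : (1 : Fin 2) ≠ 0)]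
      exact ⟨fun a => fwd1_cap e (fun j => (hs j).symm) a,
             fun v => fwd1_conserv e (fun j => (hs j).symm) v⟩
  · intro lam lam' a hfix
    have key : ∀ lam'' : Fin 2, (if lam'' = 0 then fwd0 σ else fwd1 e σ s) a = fwd0 σ a := by
      intro lam''
      by_cases h : lam'' = 0
      · simp [h]
      · simp only [if_neg h]
        exact fwd_agree e a hfix
    simp only [key]

lemma sum2_pick_succ (g : Fin n → Bool → ℤ) (q : Fin n) :
    ∑ i : Fin n, ∑ pol : Bool, (if i.succ = q.succ then g i pol else 0)
      = g q true + g q false := by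
  simp only [Fin.succ_inj, sum_if_const, Finset.sum_ite_eq', Finset.mem_univ, if_true,
    Fintype.sum_bool]

lemma sum2_pick_castSucc (g : Fin n → Bool → ℤ) (q : Fin n) :
    ∑ i : Fin n, ∑ pol : Bool, (if i.castSucc = q.castSucc then g i pol else 0)
      = g q true + g q false := by
  simp only [Fin.castSucc_inj, sum_if_const, Finset.sum_ite_eq', Finset.mem_univ, if_true,
    Fintype.sum_bool]

lemma sum2_castSucc_last (g : Fin n → Bool → ℤ) :
    ∑ i : Fin n, ∑ pol : Bool, (if i.castSucc = Fin.last n then g i pol else 0) = 0 :=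
  Finset.sum_eq_zero fun i _ => Finset.sum_eq_zero fun _ _ => if_neg (Fin.castSucc_lt_last i).ne

lemma fin2_cases (k : Fin 2) : k = 0 ∨ k = 1 := by omega

lemma backward (hn : 0 < n) (f : Fin 2 → SatA n m → ℤ)
    (hrob : IsRobust (satNet n m e) (satB n m) f) :
    ∃ σ : Fin n → Bool, ∀ j : Fin m, ∃ slot : Fin 3,
      σ (e (j, slot)).1 = (e (j, slot)).2.1 := by
  obtain ⟨hflows, hagree⟩ := hrob
  have hb0 : ∀ a, 0 ≤ f 0 a ∧ f 0 a ≤ 1 := fun a => (hflows 0).1 a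
  have hb1 : ∀ a, 0 ≤ f 1 a ∧ f 1 a ≤ 1 := fun a => (hflows 1).1 a
  have hc0 := (hflows 0).2
  have hc1 := (hflows 1).2
  -- scenario 0: clause arcs carry no flow
  have clause0 : ∀ js : Fin m × Fin 3, f 0 (cArc js) = 0 := by
    rintro ⟨j, slot⟩
    have h := hc0 (Sum.inr (Sum.inl j))
    rw [excess_u, satB0_u, Fin.sum_univ_three] at h
    have b1 := hb0 (cArc (j, 0))
    have b2 := hb0 (cArc (j, 1))
    have b3 := hb0 (cArc (j, 2))
    have hz : f 0 (cArc (j, 0)) = 0 ∧ f 0 (cArc (j, 1)) = 0 ∧ f 0 (cArc (j, 2)) = 0 := by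
      refine ⟨?_, ?_, ?_⟩ <;> omega
    rcases fin2_cases 0 with _ | _  -- dummy
    all_goals {
      fin_cases slot
      · exact hz.1
      · exact hz.2.1
      · exact hz.2.2 }
  -- scenario 0: sink arcs carry no flow
  have sink0 : ∀ o : Fin n × Bool × Fin 2, f 0 (tArc o) = 0 := by
    have h := hc0 (Sum.inr (Sum.inr (Sum.inr ())))
    rw [excess_t, satB0_t] at h
    have h' : ∑ x : Fin n × Bool × Fin 2, f 0 (tArc x) = 0 := by omega
    intro o
    exact (Finset.sum_eq_zero_iff_of_nonneg (fun x _ => (hb0 (tArc x)).1)).mp h' o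
      (Finset.mem_univ o)
  -- scenario 0 monotonicity along a literal path
  have p0p1 : ∀ (i : Fin n) (pol : Bool),
      f 0 (pArc i pol ⟨0, by omega⟩) ≤ f 0 (pArc i pol ⟨1, by omega⟩) := by
    intro i pol
    have h := hc0 (Sum.inr (Sum.inr (Sum.inl (i, pol, ⟨0, by omega⟩))))
    rw [excess_w0, satB0_w] at h
    have := (hb0 (sArc (i, pol, 0))).1
    omega
  have p1p3 : ∀ (i : Fin n) (pol : Bool),
      f 0 (pArc i pol ⟨1, by omega⟩) ≤ f 0 (pArc i pol ⟨3, by omega⟩) := by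
    intro i pol
    have h1 := hc0 (Sum.inr (Sum.inr (Sum.inl (i, pol, ⟨1, by omega⟩))))
    rw [excess_w1, satB0_w, clause0, sink0] at h1
    have h2 := hc0 (Sum.inr (Sum.inr (Sum.inl (i, pol, ⟨2, by omega⟩))))
    rw [excess_w2, satB0_w] at h2
    have := (hb0 (sArc (i, pol, 1))).1
    omega
  have p3p4 : ∀ (i : Fin n) (pol : Bool),
      f 0 (pArc i pol ⟨3, by omega⟩) = f 0 (pArc i pol ⟨4, by omega⟩) := by
    intro i pol
    have h := hc0 (Sum.inr (Sum.inr (Sum.inl (i, pol, ⟨3, by omega⟩))))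
    rw [excess_w3, satB0_w, clause0, sink0] at h
    omega
  -- the flow into v_{i+1} in scenario 0
  have hGlast : f 0 (pArc (⟨n-1, by omega⟩ : Fin n) true ⟨4, by omega⟩)
      + f 0 (pArc (⟨n-1, by omega⟩ : Fin n) false ⟨4, by omega⟩) = 1 := by
    have h := hc0 (Sum.inl (Fin.last n))
    rw [excess_inl, satB0_inl] at h
    have hlast0 : (0 : Fin (n+1)) ≠ Fin.last n := by
      rw [Fin.ne_iff_vne]; simp [Fin.val_last]; omega
    rw [if_neg hlast0, if_neg hlast0.symm, if_pos rfl] at h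
    rw [sum2_castSucc_last] at h
    rw [show Fin.last n = Fin.succ ⟨n-1, by omega⟩ from by
      rw [Fin.ext_iff]; simp [Fin.val_last, Fin.val_succ]; omega] at h
    rw [sum2_pick_succ (fun i pol => f 0 (pArc i pol ⟨4, by omega⟩))] at h
    omega
  have hGstep : ∀ (q : Fin n) (h : q.val + 1 < n),
      f 0 (pArc q true ⟨4, by omega⟩) + f 0 (pArc q false ⟨4, by omega⟩)
        ≤ f 0 (pArc (⟨q.val+1, h⟩ : Fin n) true ⟨4, by omega⟩)
          + f 0 (pArc (⟨q.val+1, h⟩ : Fin n) false ⟨4, by omega⟩) := by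
    intro q h
    have hbal := hc0 (Sum.inl (Fin.succ q))
    rw [excess_inl, satB0_inl] at hbal
    have hne0 : (0 : Fin (n+1)) ≠ Fin.succ q := (Fin.succ_ne_zero q).symm
    have hnelast : Fin.succ q ≠ Fin.last n := by
      rw [Fin.ne_iff_vne]; simp [Fin.val_succ, Fin.val_last]; omega
    rw [if_neg hne0, if_neg hne0.symm, if_neg hnelast] at hbal
    rw [sum2_pick_succ (fun i pol => f 0 (pArc i pol ⟨4, by omega⟩))] at hbal
    rw [show Fin.succ q = Fin.castSucc ⟨q.val+1, h⟩ from by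
      rw [Fin.ext_iff]; simp [Fin.val_succ]] at hbal
    rw [sum2_pick_castSucc (fun i pol => f 0 (pArc i pol ⟨0, by omega⟩))] at hbal
    have k1 := p0p1 ⟨q.val+1, h⟩ true
    have k2 := p0p1 ⟨q.val+1, h⟩ false
    have k3 := p1p3 ⟨q.val+1, h⟩ true
    have k4 := p1p3 ⟨q.val+1, h⟩ false
    have k5 := p3p4 ⟨q.val+1, h⟩ true
    have k6 := p3p4 ⟨q.val+1, h⟩ false
    omega
  have hGle : ∀ q : Fin n,
      f 0 (pArc q true ⟨4, by omega⟩) + f 0 (pArc q false ⟨4, by omega⟩) ≤ 1 := by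
    have hbase : ∀ q : Fin n, q.val = n - 1 →
        f 0 (pArc q true ⟨4, by omega⟩) + f 0 (pArc q false ⟨4, by omega⟩) ≤ 1 := by
      intro q hq
      have : q = ⟨n-1, by omega⟩ := Fin.ext hq
      rw [this]
      exact le_of_eq hGlast
    suffices H : ∀ d : ℕ, ∀ q : Fin n, n - 1 - q.val ≤ d →
        f 0 (pArc q true ⟨4, by omega⟩) + f 0 (pArc q false ⟨4, by omega⟩) ≤ 1 by
      exact fun q => H (n-1) q (by omega)
    intro d
    induction d with
    | zero =>
        intro q hq
        exact hbase q (by have := q.isLt; omega)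
    | succ d ih =>
        intro q hq
        by_cases hlt : q.val + 1 < n
        · exact le_trans (hGstep q hlt) (ih ⟨q.val+1, hlt⟩ (by simp; omega))
        · exact hbase q (by have := q.isLt; omega)
  -- the assignment
  refine ⟨fun i => decide (f 0 (pArc i true ⟨3, by omega⟩) = 1), ?_⟩
  intro j
  have hu := hc1 (Sum.inr (Sum.inl j))
  rw [excess_u, satB1_u, Fin.sum_univ_three] at hu
  have b1 := hb1 (cArc (j, 0))
  have b2 := hb1 (cArc (j, 1))
  have b3 := hb1 (cArc (j, 2))
  have main : ∀ slot : Fin 3, f 1 (cArc (j, slot)) = 1 →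
      (fun i => decide (f 0 (pArc i true ⟨3, by omega⟩) = 1)) (e (j, slot)).1
        = (e (j, slot)).2.1 := by
    intro slot hslot
    rcases hoe : e (j, slot) with ⟨i, pol, k⟩
    have hsymm : e.symm (i, pol, k) = (j, slot) := by rw [← hoe]; simp
    show decide (f 0 (pArc i true ⟨3, by omega⟩) = 1) = pol
    -- first: f 0 of the corresponding fixed arc is 1
    have hp3 : f 0 (pArc i pol ⟨3, by omega⟩) = 1 := by
      rcases fin2_cases k with rfl | rfl
      · have hw := hc1 (Sum.inr (Sum.inr (Sum.inl (i, pol, ⟨1, by omega⟩))))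
        rw [excess_w1, satB1_w, hsymm, hslot] at hw
        have q1 := (hb1 (pArc i pol ⟨2, by omega⟩)).1
        have q2 := (hb1 (tArc (i, pol, 0))).1
        have q3 := hb1 (pArc i pol ⟨1, by omega⟩)
        have hfx : (satNet n m e).isFixed (pArc i pol ⟨1, by omega⟩) = true := rfl
        have hag := hagree 0 1 (pArc i pol ⟨1, by omega⟩) hfx
        have := p1p3 i pol
        have := (hb0 (pArc i pol ⟨3, by omega⟩)).2
        omega
      · have hw := hc1 (Sum.inr (Sum.inr (Sum.inl (i, pol, ⟨3, by omega⟩))))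
        rw [excess_w3, satB1_w, hsymm, hslot] at hw
        have q1 := (hb1 (pArc i pol ⟨4, by omega⟩)).1
        have q2 := (hb1 (tArc (i, pol, 1))).1
        have q3 := hb1 (pArc i pol ⟨3, by omega⟩)
        have hfx : (satNet n m e).isFixed (pArc i pol ⟨3, by omega⟩) = true := rfl
        have hag := hagree 0 1 (pArc i pol ⟨3, by omega⟩) hfx
        omega
    cases pol
    · -- pol = false : the true-arc must be empty
      have hG := hGle i
      have k5 := p3p4 i true
      have k6 := p3p4 i false
      have q1 := (hb0 (pArc i true ⟨3, by omega⟩)).1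
      have hzero : f 0 (pArc i true ⟨3, by omega⟩) = 0 := by omega
      rw [decide_eq_false_iff_not]
      omega
    · simp only [decide_eq_true_eq]
      exact hp3
  have hex : f 1 (cArc (j, 0)) = 1 ∨ f 1 (cArc (j, 1)) = 1 ∨ f 1 (cArc (j, 2)) = 1 := by
    omega
  rcases hex with h | h | h
  · exact ⟨0, main 0 h⟩
  · exact ⟨1, main 1 h⟩
  · exact ⟨2, main 2 h⟩

end SatAux

theorem sat_reduction_correct (n m : ℕ) (hn : 0 < n)
    (e : Fin m × Fin 3 ≃ Fin n × Bool × Fin 2) :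
    (∃ σ : Fin n → Bool, ∀ j : Fin m, ∃ slot : Fin 3,
        σ (e (j, slot)).1 = (e (j, slot)).2.1) ↔
    (∃ f : Fin 2 → SatA n m → ℤ, IsRobust (satNet n m e) (satB n m) f) := by
  constructor
  · rintro ⟨σ, hsat⟩
    choose s hs using hsat
    exact SatAux.forward e hn σ s hs
  · rintro ⟨f, hrob⟩
    exact SatAux.backward e hn f hrob
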